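/- The 2-set agreement task for three agents is not solvable by the one-round immediate snapshot action model IS: for the input simplicial model I over three agents with input values from {0,1,2}, there is no morphism of simplicial models δ : I[IS] → I[𝒯] with π_I ∘ δ = π_I, where 𝒯 is the 2-set agreement task. -/

import Mathlib

/-! ### Chromatic simplicial complexes and Kripke frames -/

/-- A chromatic simplicial complex over the set of agents `A`, on the vertex type `V`. -/
structure CSC (A V : Type) where
  simplexes : Set (Set V)
  nonempty_mem : ∀ X ∈ simplexes, X.Nonempty
  finite_mem : ∀ X ∈ simplexes, X.Finite
  down_closed : ∀ X ∈ simplexes, ∀ Y : Set V, Y ⊆ X → Y.Nonempty → Y ∈ simplexes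
  color : V → A
  chromatic : ∀ X ∈ simplexes, Set.InjOn color X

namespace CSC

variable {A V W : Type}

/-- A vertex of the complex. -/
def IsVertex (C : CSC A V) (v : V) : Prop := {v} ∈ C.simplexes

/-- A facet: a maximal simplex. -/
def IsFacet (C : CSC A V) (X : Set V) : Prop :=
  X ∈ C.simplexes ∧ ∀ Y ∈ C.simplexes, X ⊆ Y → X = Y

/-- A pure chromatic simplicial complex of dimension `n`: all facets have `n+1` vertices. -/
def Pure (C : CSC A V) (n : ℕ) : Prop :=
  ∀ X, C.IsFacet X → X.ncard = n + 1

/-- A chromatic simplicial map: sends simplexes to simplexes and preserves colors. -/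
def IsChromMap (C : CSC A V) (D : CSC A W) (f : V → W) : Prop :=
  (∀ X ∈ C.simplexes, f '' X ∈ D.simplexes) ∧
  (∀ v, C.IsVertex v → D.color (f v) = C.color v)

/-- The type of facets of a complex. -/
def Facets (C : CSC A V) : Type := {X : Set V // C.IsFacet X}

/-- The vertices of a complex, as a type. -/
abbrev Vertices (C : CSC A V) : Type := {v : V // C.IsVertex v}

end CSC

/-- A Kripke frame over the set of agents `A` with states `S`:
a family of equivalence (indistinguishability) relations indexed by agents. -/
structure KFrame (A S : Type) where
  rel : A → S → S → Prop
  isEquiv : ∀ a, Equivalence (rel a)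

namespace KFrame

/-- A Kripke frame is proper if any two distinct states are distinguished by some agent. -/
def Proper {A S : Type} (M : KFrame A S) : Prop := ∀ s t : S, (∀ a, M.rel a s t) → s = t

/-- A morphism of Kripke frames. -/
def IsMorphism {A S T : Type} (M : KFrame A S) (N : KFrame A T) (f : S → T) : Prop :=
  ∀ a u v, M.rel a u v → N.rel a (f u) (f v)

end KFrame


lemma CSC.isVertex_of_mem {A V : Type} (C : CSC A V) {X : Set V} {v : V}
    (hX : X ∈ C.simplexes) (hv : v ∈ X) : C.IsVertex v :=
  C.down_closed X hX {v} (by simpa using hv) ⟨v, rfl⟩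

/-! ### Basic facts about pure chromatic complexes over `n+1` agents -/

namespace CSC

variable {n : ℕ} {V : Type}

lemma ncard_le_of_mem (C : CSC (Fin (n+1)) V) {X : Set V} (hX : X ∈ C.simplexes) :
    X.ncard ≤ n + 1 := by
  have h1 : (C.color '' X).ncard = X.ncard := Set.ncard_image_of_injOn (C.chromatic X hX)
  calc X.ncard = (C.color '' X).ncard := h1.symm
    _ ≤ (Set.univ : Set (Fin (n+1))).ncard :=
        Set.ncard_le_ncard (Set.subset_univ _) Set.finite_univ
    _ = n + 1 := by rw [Set.ncard_univ]; simp

/-- Every simplex of a chromatic complex over `n+1` agents is contained in a facet. -/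
lemma exists_facet_above (C : CSC (Fin (n+1)) V) :
    ∀ (k : ℕ) (X : Set V), X ∈ C.simplexes → n + 1 ≤ X.ncard + k →
      ∃ Y, C.IsFacet Y ∧ X ⊆ Y := by
  intro k
  induction k with
  | zero =>
    intro X hX hle
    refine ⟨X, ⟨hX, ?_⟩, subset_rfl⟩
    intro Y hY hXY
    exact (Set.eq_of_subset_of_ncard_le hXY
      (le_trans (C.ncard_le_of_mem hY) (by omega)) (C.finite_mem Y hY))
  | succ k ih =>
    intro X hX hle
    by_cases hf : C.IsFacet X
    · exact ⟨X, hf, subset_rfl⟩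
    · simp only [IsFacet, hX, true_and] at hf
      push_neg at hf
      obtain ⟨Y, hY, hXY, hne⟩ := hf
      have hlt : X.ncard < Y.ncard :=
        Set.ncard_lt_ncard (ssubset_of_subset_of_ne hXY hne) (C.finite_mem Y hY)
      obtain ⟨Z, hZ, hYZ⟩ := ih Y hY (by omega)
      exact ⟨Z, hZ, hXY.trans hYZ⟩

lemma mem_facet (C : CSC (Fin (n+1)) V) {X : Set V} (hX : X ∈ C.simplexes) :
    ∃ Y, C.IsFacet Y ∧ X ⊆ Y :=
  C.exists_facet_above (n+1) X hX (by omega)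

/-- In a pure complex of dimension `n` over `n+1` agents, every facet contains a vertex
of each color. -/
lemma facet_exists_color (C : CSC (Fin (n+1)) V) (hp : C.Pure n)
    {X : Set V} (hX : C.IsFacet X) (a : Fin (n+1)) : ∃ v ∈ X, C.color v = a := by
  have himg : (C.color '' X).ncard = n + 1 := by
    rw [Set.ncard_image_of_injOn (C.chromatic X hX.1)]
    exact hp X hX
  have huniv : C.color '' X = Set.univ := by
    apply Set.eq_of_subset_of_ncard_le (Set.subset_univ _) ?_ Set.finite_univ
    rw [himg, Set.ncard_univ]; simp
  have ha : a ∈ C.color '' X := by rw [huniv]; trivial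
  obtain ⟨v, hv, hc⟩ := ha
  exact ⟨v, hv, hc⟩

end CSC

/-! ### The functor F : from pure chromatic simplicial complexes to Kripke frames. -/

/-- The Kripke frame associated with a pure chromatic simplicial complex: states are the
facets, and two facets are indistinguishable by agent `a` iff they share an `a`-colored
vertex. -/
def kframeOf {n : ℕ} {V : Type} (C : CSC (Fin (n+1)) V) (hp : C.Pure n) :
    KFrame (Fin (n+1)) C.Facets where
  rel a X Y := ∃ v, v ∈ X.1 ∩ Y.1 ∧ C.color v = a
  isEquiv a := by
    constructor
    · intro X
      obtain ⟨v, hv, hc⟩ := C.facet_exists_color hp X.2 a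
      exact ⟨v, ⟨hv, hv⟩, hc⟩
    · rintro X Y ⟨v, ⟨h1, h2⟩, hc⟩
      exact ⟨v, ⟨h2, h1⟩, hc⟩
    · rintro X Y Z ⟨v, ⟨hvX, hvY⟩, hcv⟩ ⟨w, ⟨hwY, hwZ⟩, hcw⟩
      have hvw : v = w := C.chromatic Y.1 Y.2.1 hvY hwY (by rw [hcv, hcw])
      exact ⟨v, ⟨hvX, by rw [hvw]; exact hwZ⟩, hcv⟩

lemma kframeOf_proper {n : ℕ} {V : Type} (C : CSC (Fin (n+1)) V) (hp : C.Pure n) :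
    (kframeOf C hp).Proper := by
  have key : ∀ Z W : C.Facets, (∀ a, ∃ v, v ∈ Z.1 ∩ W.1 ∧ C.color v = a) → W.1 ⊆ Z.1 := by
    intro Z W hzw w hw
    obtain ⟨v, ⟨hvZ, hvW⟩, hcv⟩ := hzw (C.color w)
    have : v = w := C.chromatic W.1 W.2.1 hvW hw hcv
    exact this ▸ hvZ
  intro X Y h
  apply Subtype.ext
  apply Set.Subset.antisymm
  · apply key Y X
    intro a
    obtain ⟨v, hv, hc⟩ := h a
    exact ⟨v, ⟨hv.2, hv.1⟩, hc⟩
  · exact key X Y h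

/-! ### The epistemic language `𝓛_K` -/

/-- Epistemic formulas over agents `A` and atomic propositions `AP`:
`φ ::= p | ¬φ | (φ ∧ φ) | K_a φ`. -/
inductive Form (A AP : Type) : Type
  | atom : AP → Form A AP
  | neg : Form A AP → Form A AP
  | and : Form A AP → Form A AP → Form A AP
  | K : A → Form A AP → Form A AP

namespace Form

variable {A AP : Type}

/-- Implication, as a derived connective. -/
def imp (φ ψ : Form A AP) : Form A AP := .neg (.and φ (.neg ψ))

/-- Disjunction, as a derived connective. -/
def or (φ ψ : Form A AP) : Form A AP := .neg (.and (.neg φ) (.neg ψ))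

/-- A false formula. -/
def falsum [Inhabited AP] : Form A AP := .and (.atom default) (.neg (.atom default))

/-- A true formula. -/
def verum [Inhabited AP] : Form A AP := .neg falsum

end Form

/-- Finite disjunctions. -/
def bigOr {A AP : Type} [Inhabited AP] (l : List (Form A AP)) : Form A AP :=
  l.foldr Form.or Form.falsum

/-- Finite conjunctions. -/
def bigAnd {A AP : Type} [Inhabited AP] (l : List (Form A AP)) : Form A AP :=
  l.foldr Form.and Form.verum

/-! ### Simplicial models and their semantics.
Atomic propositions are pairs `(a, x)`: "agent `a` holds the value `x`". -/

/-- A simplicial model: a chromatic simplicial complex together with a labeling of each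
vertex by a set of atomic propositions concerning the agent coloring that vertex. -/
structure SModel (A V Val : Type) extends CSC A V where
  label : V → Set (A × Val)
  label_local : ∀ v, toCSC.IsVertex v → ∀ p ∈ label v, p.1 = color v

namespace SModel

variable {A V W Val : Type}

/-- Satisfaction of a formula at a facet of a simplicial model. -/
def sat (M : SModel A V Val) : Set V → Form A (A × Val) → Prop
  | X, .atom p => ∃ v ∈ X, p ∈ M.label v
  | X, .neg φ => ¬ M.sat X φ
  | X, .and φ ψ => M.sat X φ ∧ M.sat X ψ
  | X, .K a φ => ∀ Y, M.toCSC.IsFacet Y → (∃ v, v ∈ X ∩ Y ∧ M.color v = a) → M.sat Y φ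

/-- A morphism of simplicial models: a chromatic simplicial map preserving the labeling. -/
def IsMorphism (M : SModel A V Val) (N : SModel A W Val) (f : V → W) : Prop :=
  M.toCSC.IsChromMap N.toCSC f ∧ ∀ v, M.toCSC.IsVertex v → N.label (f v) = M.label v

end SModel

/-! ### Chromatic products -/

/-- The chromatic product of a set of vertices of `V` and a set of vertices of `W`:
pairs of vertices with matching colors. -/
def chromPair {A V W : Type} (cV : V → A) (cW : W → A) (X : Set V) (Y : Set W) :
    Set (V × W) :=
  {p | p.1 ∈ X ∧ p.2 ∈ Y ∧ cV p.1 = cW p.2}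

/-- The chromatic product of two facets of pure complexes over `n+1` agents has `n+1`
elements. -/
lemma CSC.ncard_chromPair {n : ℕ} {V W : Type} (C : CSC (Fin (n+1)) V)
    (D : CSC (Fin (n+1)) W) (hpC : C.Pure n) (hpD : D.Pure n)
    {X : Set V} {Y : Set W} (hX : C.IsFacet X) (hY : D.IsFacet Y) :
    (chromPair C.color D.color X Y).ncard = n + 1 := by
  have hinj : Set.InjOn Prod.fst (chromPair C.color D.color X Y) := by
    rintro p ⟨hp1, hp2, hpc⟩ q ⟨hq1, hq2, hqc⟩ h
    have h2 : p.2 = q.2 := D.chromatic Y hY.1 hp2 hq2 (by rw [← hpc, ← hqc, h])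
    exact Prod.ext h h2
  have himg : Prod.fst '' chromPair C.color D.color X Y = X := by
    apply Set.Subset.antisymm
    · rintro u ⟨p, hp, rfl⟩
      exact hp.1
    · intro u hu
      obtain ⟨w, hw, hcw⟩ := D.facet_exists_color hpD hY (C.color u)
      exact ⟨(u, w), ⟨hu, hw, hcw.symm⟩, rfl⟩
  rw [← Set.ncard_image_of_injOn hinj, himg]
  exact hpC X hX

lemma CSC.chromPair_nonempty {n : ℕ} {V W : Type} (C : CSC (Fin (n+1)) V)
    (D : CSC (Fin (n+1)) W) (hpD : D.Pure n)
    {X : Set V} {Y : Set W} (hX : C.IsFacet X) (hY : D.IsFacet Y) :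
    (chromPair C.color D.color X Y).Nonempty := by
  obtain ⟨u, hu⟩ := C.nonempty_mem X hX.1
  obtain ⟨w, hw, hcw⟩ := D.facet_exists_color hpD hY (C.color u)
  exact ⟨(u, w), hu, hw, hcw.symm⟩

/-! ### Simplicial action models and the simplicial product update -/

/-- A simplicial action model: a chromatic simplicial complex of actions together with a
precondition formula for each facet. -/
structure SActModel (A W Val : Type) extends CSC A W where
  pre : Set W → Form A (A × Val)

/-- The product update of a simplicial model `M` with a simplicial action model `Act`:
the subcomplex of the chromatic cartesian product induced by the products `X × Y` of a
facet `X` of `M` and a facet (action) `Y` of `Act` such that `pre(Y)` holds at `X`.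
Labels are inherited from the first component. -/
def SModel.update {A V W Val : Type} (M : SModel A V Val) (Act : SActModel A W Val) :
    SModel A (V × W) Val where
  simplexes := {Z | Z.Nonempty ∧ ∃ X Y, M.toCSC.IsFacet X ∧ Act.toCSC.IsFacet Y ∧
    M.sat X (Act.pre Y) ∧ Z ⊆ chromPair M.color Act.color X Y}
  nonempty_mem _ h := h.1
  finite_mem Z h := by
    obtain ⟨-, X, Y, hX, hY, -, hsub⟩ := h
    exact (((M.toCSC.finite_mem X hX.1).prod (Act.toCSC.finite_mem Y hY.1)).subset
      (fun p hp => Set.mk_mem_prod hp.1 hp.2.1)).subset hsub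
  down_closed Z hZ Y' hsub hne := by
    obtain ⟨-, X, Y, hX, hY, hpre, hZsub⟩ := hZ
    exact ⟨hne, X, Y, hX, hY, hpre, hsub.trans hZsub⟩
  color p := M.color p.1
  chromatic := by
    rintro Z ⟨-, X, Y, hX, hY, -, hsub⟩ p hp q hq hc
    obtain ⟨hp1, hp2, hpc⟩ := hsub hp
    obtain ⟨hq1, hq2, hqc⟩ := hsub hq
    have h1 : p.1 = q.1 := M.toCSC.chromatic X hX.1 hp1 hq1 hc
    have h2 : p.2 = q.2 := Act.toCSC.chromatic Y hY.1 hp2 hq2 (by rw [← hpc, ← hqc, h1])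
    exact Prod.ext h1 h2
  label p := M.label p.1
  label_local := by
    rintro ⟨u, w⟩ hv p hp
    obtain ⟨-, X, Y, hX, hY, -, hsub⟩ := hv
    have hu : u ∈ X := (hsub (Set.mem_singleton _)).1
    exact M.label_local u (M.toCSC.isVertex_of_mem hX.1 hu) p hp

/-- The product update of pure simplicial models is pure: its facets are exactly the
chromatic products `X × Y` of enabled pairs of facets. -/
lemma SModel.update_pure {n : ℕ} {V W Val : Type} (M : SModel (Fin (n+1)) V Val)
    (Act : SActModel (Fin (n+1)) W Val) (hpM : M.toCSC.Pure n)
    (hpA : Act.toCSC.Pure n) : (M.update Act).toCSC.Pure n := by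
  rintro Z ⟨⟨-, X, Y, hX, hY, hpre, hsub⟩, hmax⟩
  have hne : (chromPair M.color Act.color X Y).Nonempty :=
    M.toCSC.chromPair_nonempty Act.toCSC hpA hX hY
  have hmem : chromPair M.color Act.color X Y ∈ (M.update Act).simplexes :=
    ⟨hne, X, Y, hX, hY, hpre, subset_rfl⟩
  have hZ : Z = chromPair M.color Act.color X Y := hmax _ hmem hsub
  rw [hZ]
  exact M.toCSC.ncard_chromPair Act.toCSC hpM hpA hX hY

/-! ### The input simplicial model and the consensus task -/

/-- The input simplicial model: each agent independently receives an input value in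
`Val`. The vertex `(a, x)` means "agent `a` has input `x`", labeled by the corresponding
atomic proposition; simplexes are the partial input assignments, so facets are the total
input assignments. -/
def inputModel (n : ℕ) (Val : Type) : SModel (Fin (n+1)) (Fin (n+1) × Val) Val where
  simplexes := {X | X.Nonempty ∧ Set.InjOn Prod.fst X}
  nonempty_mem _ h := h.1
  finite_mem X h := Set.Finite.of_finite_image (Set.toFinite _) h.2
  down_closed X hX Y hYX hY := ⟨hY, hX.2.mono hYX⟩
  color := Prod.fst
  chromatic _ h := h.2
  label p := {p}
  label_local := by
    rintro v _ p hp
    rw [Set.mem_singleton_iff] at hp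
    rw [hp]

/-- The formula `φ_x`: "at least one agent has input `x`". -/
def someone (n : ℕ) {Val : Type} [Inhabited Val] (x : Val) :
    Form (Fin (n+1)) (Fin (n+1) × Val) :=
  bigOr ((List.finRange (n+1)).map fun a => Form.atom (a, x))

/-- The decision assignment where every agent decides the value `x`. -/
def allDecide (n : ℕ) {Val : Type} (x : Val) : Set (Fin (n+1) × Val) := {p | p.2 = x}

open Classical in
/-- The binary consensus task, as a simplicial action model: it has exactly two facets,
`X_0 = allDecide false` (every agent decides `0`, with precondition "someone has input
`0`", i.e. true at every input facet except the all-`1` one) and `X_1 = allDecide true`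
(symmetrically). -/
noncomputable def consensusTask (n : ℕ) :
    SActModel (Fin (n+1)) (Fin (n+1) × Bool) Bool where
  simplexes := {Z | Z.Nonempty ∧ Set.InjOn Prod.fst Z ∧ ∃ b : Bool, ∀ p ∈ Z, p.2 = b}
  nonempty_mem _ h := h.1
  finite_mem Z h := Set.Finite.of_finite_image (Set.toFinite _) h.2.1
  down_closed Z hZ Y hYZ hY :=
    ⟨hY, hZ.2.1.mono hYZ, hZ.2.2.imp fun b hb p hp => hb p (hYZ hp)⟩
  color := Prod.fst
  chromatic _ h := h.2.1
  pre Z := if ∃ p ∈ Z, p.2 = true then someone n true else someone n false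

/-- A sequential partition of the agents `Fin (n+1)`, encoded by its rank function `ord`:
the concurrency classes are the fibers of `ord`, ordered by rank, and the ranks occurring
form an initial segment of `ℕ`. -/
def IsSeqPart {n : ℕ} (ord : Fin (n+1) → ℕ) : Prop :=
  ∀ (a : Fin (n+1)) (k : ℕ), k ≤ ord a → ∃ b, ord b = k

/-! ### The one-round immediate snapshot action model over the input model -/

/-- The view of agent `a` in the immediate snapshot with schedule `ord` and input
assignment `κ`: agent `a` sees the input pairs of exactly the agents of rank at most
its own. -/
def isView {n : ℕ} {Val : Type} (κ : Fin (n+1) → Val) (ord : Fin (n+1) → ℕ)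
    (a : Fin (n+1)) : Set (Fin (n+1) × Val) :=
  {p | ord p.1 ≤ ord a ∧ p.2 = κ p.1}

/-- The immediate snapshot action `c^X` for the input assignment `κ` (determining the
input facet `X`) and the sequential partition `ord`: the set of vertices `⟨a, view_a⟩`. -/
def isAction {n : ℕ} {Val : Type} (κ : Fin (n+1) → Val) (ord : Fin (n+1) → ℕ) :
    Set (Fin (n+1) × Set (Fin (n+1) × Val)) :=
  Set.range fun a => (a, isView κ ord a)

open Classical in
/-- The one-round immediate snapshot action model over the input model `inputModel n Val`:
one action `c^X` for each input facet `X` and each sequential partition `c`, whose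
precondition is true exactly at `X`; vertices of different actions carrying the same pair
`⟨agent, view⟩` are identified. -/
noncomputable def ISact (n : ℕ) (Val : Type) [Inhabited Val] :
    SActModel (Fin (n+1)) (Fin (n+1) × Set (Fin (n+1) × Val)) Val where
  simplexes := {Z | Z.Nonempty ∧ ∃ κ ord, IsSeqPart ord ∧ Z ⊆ isAction κ ord}
  nonempty_mem _ h := h.1
  finite_mem Z h := by
    obtain ⟨-, κ, ord, -, hsub⟩ := h
    exact (Set.finite_range _).subset hsub
  down_closed Z hZ Y hYZ hY := by
    obtain ⟨-, κ, ord, hord, hsub⟩ := hZ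
    exact ⟨hY, κ, ord, hord, hYZ.trans hsub⟩
  color := Prod.fst
  chromatic := by
    rintro Z ⟨-, κ, ord, -, hsub⟩ p hp q hq hc
    obtain ⟨a, ha⟩ := hsub hp
    obtain ⟨b, hb⟩ := hsub hq
    rw [← ha, ← hb] at hc ⊢
    dsimp at hc
    rw [hc]
  pre Z :=
    if h : ∃ κ ord, IsSeqPart ord ∧ Z = isAction κ ord then
      bigAnd ((List.finRange (n+1)).map fun a => Form.atom (a, h.choose a))
    else Form.falsum

/-! ### The 2-set agreement task for three agents -/

open Classical in
/-- The 2-set agreement task for the three agents `Fin 3` with values in `{0,1,2} = Fin 3`: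
its facets are the decision assignments `X_{d₀,d₁,d₂}` using at most `2` distinct values,
with precondition `φ_{d₀} ∧ φ_{d₁} ∧ φ_{d₂}` ("every decided value is some agent's
input"). -/
noncomputable def setAgreementTask : SActModel (Fin 3) (Fin 3 × Fin 3) (Fin 3) where
  simplexes := {Z | Z.Nonempty ∧ Set.InjOn Prod.fst Z ∧ (Prod.snd '' Z).ncard ≤ 2}
  nonempty_mem _ h := h.1
  finite_mem Z h := Set.Finite.of_finite_image (Set.toFinite _) h.2.1
  down_closed Z hZ Y hYZ hY := ⟨hY, hZ.2.1.mono hYZ,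
    le_trans (Set.ncard_le_ncard (Set.image_mono hYZ) (Set.toFinite _)) hZ.2.2⟩
  color := Prod.fst
  chromatic _ h := h.2.1
  pre Z :=
    if h : ∃ d : Fin 3 → Fin 3, Z = {p : Fin 3 × Fin 3 | p.2 = d p.1} then
      bigAnd ((List.finRange 3).map fun a => someone 2 (h.choose a))
    else Form.falsum


/-! ### Auxiliary machinery for Statement 18 -/

namespace S18

open Set

/-- cardinality of the range of an injective map from `Fin 3`. -/
lemma ncard_range3 {β : Type} (f : Fin 3 → β) (hf : Function.Injective f) :
    (Set.range f).ncard = 3 := by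
  rw [← Set.image_univ, Set.ncard_image_of_injective _ hf, Set.ncard_univ]
  simp

/-- a 3-element simplex of a chromatic complex over 3 agents is a facet. -/
lemma facet_of_three {V : Type} (C : CSC (Fin (2+1)) V) {Z : Set V}
    (hZ : Z ∈ C.simplexes) (h3 : Z.ncard = 3) : C.IsFacet Z := by
  refine ⟨hZ, fun Y hY hsub => Set.eq_of_subset_of_ncard_le hsub ?_ (C.finite_mem Y hY)⟩
  rw [h3]
  exact C.ncard_le_of_mem hY

section Sat

variable {A V Val : Type} [Inhabited (A × Val)] (M : SModel A V Val) (X : Set V)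

lemma sat_verum : M.sat X Form.verum := fun ⟨h1, h2⟩ => h2 h1

lemma sat_bigAnd (l : List (Form A (A × Val))) :
    M.sat X (bigAnd l) ↔ ∀ φ ∈ l, M.sat X φ := by
  induction l with
  | nil => simpa [bigAnd] using sat_verum M X
  | cons φ l ih =>
    show M.sat X (Form.and φ (bigAnd l)) ↔ _
    rw [show M.sat X (Form.and φ (bigAnd l)) = (M.sat X φ ∧ M.sat X (bigAnd l)) from rfl, ih]
    simp

lemma sat_falsum : ¬ M.sat X Form.falsum := fun ⟨h1, h2⟩ => h2 h1

lemma sat_bigOr (l : List (Form A (A × Val))) :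
    M.sat X (bigOr l) ↔ ∃ φ ∈ l, M.sat X φ := by
  induction l with
  | nil => simpa [bigOr] using sat_falsum M X
  | cons φ l ih =>
    show M.sat X (Form.or φ (bigOr l)) ↔ _
    have : M.sat X (Form.or φ (bigOr l)) ↔ ¬(¬ M.sat X φ ∧ ¬ M.sat X (bigOr l)) := Iff.rfl
    rw [this, ih]
    constructor
    · intro h
      by_cases hφ : M.sat X φ
      · exact ⟨φ, List.mem_cons_self, hφ⟩
      · have hB : ∃ ψ ∈ l, M.sat X ψ := by
          by_contra hB
          exact h ⟨hφ, hB⟩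
        obtain ⟨ψ, hψ, hs⟩ := hB
        exact ⟨ψ, List.mem_cons_of_mem _ hψ, hs⟩
    · rintro ⟨ψ, hψ, hs⟩ ⟨h1, h2⟩
      rcases List.mem_cons.mp hψ with rfl | hl
      exacts [h1 hs, h2 ⟨ψ, hl, hs⟩]

end Sat

lemma sat_someone_iff {V : Type} (M : SModel (Fin (2+1)) V (Fin 3)) (X : Set V) (x : Fin 3) :
    M.sat X (someone 2 x) ↔ ∃ a : Fin (2+1), ∃ v ∈ X, (a, x) ∈ M.label v := by
  rw [someone, sat_bigOr]
  constructor
  · rintro ⟨φ, hφ, hsat⟩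
    simp only [List.mem_map, List.mem_finRange, true_and] at hφ
    obtain ⟨a, rfl⟩ := hφ
    exact ⟨a, hsat⟩
  · rintro ⟨a, hsat⟩
    exact ⟨Form.atom (a, x), by simp [List.mem_map], hsat⟩

/-! ### The input facet `X κ` -/

/-- the input facet for assignment `κ`. -/
def Xf (κ : Fin 3 → Fin 3) : Set (Fin 3 × Fin 3) := Set.range fun a => (a, κ a)

lemma Xf_mem (κ : Fin 3 → Fin 3) : Xf κ ∈ (inputModel 2 (Fin 3)).simplexes := by
  refine ⟨⟨(0, κ 0), ⟨0, rfl⟩⟩, ?_⟩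
  rintro p ⟨a, rfl⟩ q ⟨b, rfl⟩ h
  simp only at h
  simp [h]

lemma Xf_facet (κ : Fin 3 → Fin 3) : (inputModel 2 (Fin 3)).toCSC.IsFacet (Xf κ) :=
  facet_of_three _ (Xf_mem κ) (ncard_range3 _ (fun a b h => congrArg Prod.fst h))

/-! ### The immediate snapshot action facet `isAction κ ord` -/

lemma isAction_mem (κ : Fin 3 → Fin 3) (ord : Fin 3 → ℕ) (hord : IsSeqPart ord) :
    isAction κ ord ∈ (ISact 2 (Fin 3)).simplexes :=
  ⟨⟨_, ⟨0, rfl⟩⟩, κ, ord, hord, subset_rfl⟩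

lemma isAction_facet (κ : Fin 3 → Fin 3) (ord : Fin 3 → ℕ) (hord : IsSeqPart ord) :
    (ISact 2 (Fin 3)).toCSC.IsFacet (isAction κ ord) :=
  facet_of_three _ (isAction_mem κ ord hord)
    (ncard_range3 _ (fun a b h => congrArg Prod.fst h))

lemma isAction_kappa {κ κ' : Fin 3 → Fin 3} {ord ord' : Fin 3 → ℕ}
    (h : isAction κ ord = isAction κ' ord') (a : Fin 3) : κ a = κ' a := by
  have h1 : (a, isView κ ord a) ∈ isAction κ' ord' := h ▸ ⟨a, rfl⟩
  obtain ⟨b, hb⟩ := h1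
  have hba : b = a := congrArg Prod.fst hb
  subst hba
  have hv : isView κ' ord' b = isView κ ord b := congrArg Prod.snd hb
  have hmem : (b, κ b) ∈ isView κ ord b := ⟨le_refl _, rfl⟩
  rw [← hv] at hmem
  exact hmem.2

lemma pre_IS_sat (κ : Fin 3 → Fin 3) (ord : Fin 3 → ℕ) (hord : IsSeqPart ord) :
    (inputModel 2 (Fin 3)).sat (Xf κ) ((ISact 2 (Fin 3)).pre (isAction κ ord)) := by
  have hex : ∃ κ₀ ord₀, IsSeqPart ord₀ ∧ isAction κ ord = isAction κ₀ ord₀ :=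
    ⟨κ, ord, hord, rfl⟩
  have hpre : (ISact 2 (Fin 3)).pre (isAction κ ord) =
      bigAnd ((List.finRange (2+1)).map fun a => Form.atom (a, hex.choose a)) :=
    dif_pos hex
  rw [hpre, sat_bigAnd]
  intro φ hφ
  simp only [List.mem_map, List.mem_finRange, true_and] at hφ
  obtain ⟨a, rfl⟩ := hφ
  have hk : κ a = hex.choose a := isAction_kappa hex.choose_spec.choose_spec.2 a
  exact ⟨(a, κ a), ⟨a, rfl⟩, by rw [← hk]; rfl⟩

/-! ### Facets of the 2-set agreement task -/

lemma range_eq_setOf (d : Fin 3 → Fin 3) :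
    (Set.range fun a => (a, d a)) = {p : Fin 3 × Fin 3 | p.2 = d p.1} := by
  ext ⟨a, x⟩
  constructor
  · rintro ⟨b, hb⟩
    obtain ⟨rfl, rfl⟩ : b = a ∧ d b = x := ⟨congrArg Prod.fst hb, congrArg Prod.snd hb⟩
    exact rfl
  · intro h
    exact ⟨a, by rw [show x = d a from h]⟩

open Classical in
lemma T_facet_form {Z : Set (Fin 3 × Fin 3)} (hZ : setAgreementTask.toCSC.IsFacet Z) :
    ∃ d : Fin 3 → Fin 3, Z = {p : Fin 3 × Fin 3 | p.2 = d p.1} := by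
  obtain ⟨⟨⟨p0, hp0⟩, hinj, hcard⟩, hmax⟩ := hZ
  set d : Fin 3 → Fin 3 := fun a => if h : ∃ x, (a, x) ∈ Z then h.choose else p0.2 with hd
  have hsub : Z ⊆ Set.range fun a => (a, d a) := by
    rintro ⟨a, x⟩ hax
    have hx : ∃ x, (a, x) ∈ Z := ⟨x, hax⟩
    have hdx : d a = x := by
      rw [hd]
      simp only [dif_pos hx]
      exact congrArg Prod.snd (hinj hx.choose_spec hax rfl)
    exact ⟨a, by simp only []; rw [hdx]⟩
  have hrangesub : Set.range d ⊆ Prod.snd '' Z := by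
    rintro x ⟨a, rfl⟩
    by_cases h : ∃ y, (a, y) ∈ Z
    · have : d a = h.choose := by rw [hd]; simp only [dif_pos h]
      exact ⟨(a, h.choose), h.choose_spec, this.symm⟩
    · have : d a = p0.2 := by rw [hd]; simp only [dif_neg h]
      exact ⟨p0, hp0, this.symm⟩
  have hmem : (Set.range fun a => (a, d a)) ∈ setAgreementTask.simplexes := by
    refine ⟨⟨_, ⟨0, rfl⟩⟩, ?_, ?_⟩
    · rintro p ⟨a, rfl⟩ q ⟨b, rfl⟩ h
      simp only at h
      simp [h]
    · have himg : Prod.snd '' (Set.range fun a => (a, d a)) = Set.range d := by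
        rw [← Set.range_comp]
        rfl
      rw [himg]
      calc (Set.range d).ncard ≤ (Prod.snd '' Z).ncard :=
            Set.ncard_le_ncard hrangesub
              ((Set.Finite.of_finite_image (Set.toFinite _) hinj).image _)
        _ ≤ 2 := hcard
  have hZeq : Z = Set.range fun a => (a, d a) := hmax _ hmem hsub
  exact ⟨d, by rw [hZeq, range_eq_setOf]⟩

lemma T_pre_decode {Xs : Set (Fin 3 × Fin 3)} {d : Fin 3 → Fin 3}
    (hs : (inputModel 2 (Fin 3)).sat Xs (setAgreementTask.pre {p : Fin 3 × Fin 3 | p.2 = d p.1}))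
    (a : Fin 3) : ∃ b, (b, d a) ∈ Xs := by
  have hex : ∃ d' : Fin 3 → Fin 3,
      ({p : Fin 3 × Fin 3 | p.2 = d p.1}) = {p : Fin 3 × Fin 3 | p.2 = d' p.1} := ⟨d, rfl⟩
  have hpre : setAgreementTask.pre {p : Fin 3 × Fin 3 | p.2 = d p.1} =
      bigAnd ((List.finRange 3).map fun a => someone 2 (hex.choose a)) := dif_pos hex
  have hch : ∀ a, hex.choose a = d a := by
    intro a
    have hmem : (a, d a) ∈ ({p : Fin 3 × Fin 3 | p.2 = d p.1} : Set _) := rfl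
    rw [hex.choose_spec] at hmem
    exact hmem.symm
  rw [hpre, sat_bigAnd] at hs
  have := hs (someone 2 (hex.choose a)) (by simp [List.mem_map])
  rw [hch, sat_someone_iff] at this
  obtain ⟨b, v, hv, hlabel⟩ := this
  have : (b, d a) = v := hlabel
  exact ⟨b, this ▸ hv⟩

/-! ### Analysis of the image of an immediate-snapshot facet under `δ` -/

lemma facet_analysis
    (δ : (Fin 3 × Fin 3) × (Fin 3 × Set (Fin 3 × Fin 3)) → (Fin 3 × Fin 3) × (Fin 3 × Fin 3))
    (hδ : ((inputModel 2 (Fin 3)).update (ISact 2 (Fin 3))).IsMorphism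
          ((inputModel 2 (Fin 3)).update setAgreementTask) δ)
    (hπ : ∀ p, ((inputModel 2 (Fin 3)).update (ISact 2 (Fin 3))).toCSC.IsVertex p →
          (δ p).1 = p.1)
    (κ : Fin 3 → Fin 3) (ord : Fin 3 → ℕ) (hord : IsSeqPart ord) :
    ∃ d : Fin 3 → Fin 3,
      (∀ a, (δ ((a, κ a), (a, isView κ ord a))).2 = (a, d a)) ∧
      (∀ a, ∃ b, d a = κ b) ∧ (Set.range d).ncard ≤ 2 := by
  set va : Fin 3 → (Fin 3 × Fin 3) × (Fin 3 × Set (Fin 3 × Fin 3)) :=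
    fun a => ((a, κ a), (a, isView κ ord a)) with hva
  set F : Set ((Fin 3 × Fin 3) × (Fin 3 × Set (Fin 3 × Fin 3))) := Set.range va with hF
  have hFsub : F ⊆ chromPair (inputModel 2 (Fin 3)).color (ISact 2 (Fin 3)).color
      (Xf κ) (isAction κ ord) := by
    rintro p ⟨a, rfl⟩
    exact ⟨⟨a, rfl⟩, ⟨a, rfl⟩, rfl⟩
  have hFmem : F ∈ ((inputModel 2 (Fin 3)).update (ISact 2 (Fin 3))).simplexes :=
    ⟨⟨va 0, ⟨0, rfl⟩⟩, Xf κ, isAction κ ord, Xf_facet κ, isAction_facet κ ord hord,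
      pre_IS_sat κ ord hord, hFsub⟩
  have hvert : ∀ a, ((inputModel 2 (Fin 3)).update (ISact 2 (Fin 3))).toCSC.IsVertex (va a) :=
    fun a => CSC.isVertex_of_mem _ hFmem ⟨a, rfl⟩
  have himg := hδ.1.1 F hFmem
  obtain ⟨-, X', Y', hX', hY', hpre', hsub⟩ := himg
  have hmemcp : ∀ a, δ (va a) ∈ chromPair (inputModel 2 (Fin 3)).color
      setAgreementTask.color X' Y' := fun a => hsub ⟨va a, ⟨a, rfl⟩, rfl⟩
  have hfst : ∀ a, (δ (va a)).1 = (a, κ a) := fun a => hπ (va a) (hvert a)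
  -- X' is the input facet for κ
  have hX'eq : Xf κ = X' := by
    apply (Xf_facet κ).2 X' hX'.1
    rintro p ⟨a, rfl⟩
    have := (hmemcp a).1
    rwa [hfst a] at this
  -- Y' is a decision facet
  obtain ⟨d, hY'eq⟩ := T_facet_form hY'
  refine ⟨d, ?_, ?_, ?_⟩
  · intro a
    have hcol : (inputModel 2 (Fin 3)).color (δ (va a)).1 =
        setAgreementTask.color (δ (va a)).2 := (hmemcp a).2.2
    have hc1 : (δ (va a)).2.1 = a := by
      have : (δ (va a)).1.1 = (δ (va a)).2.1 := hcol
      rw [hfst a] at this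
      exact this.symm
    have hmem2 : (δ (va a)).2 ∈ Y' := (hmemcp a).2.1
    rw [hY'eq] at hmem2
    have hc2 : (δ (va a)).2.2 = d a := by
      have : (δ (va a)).2.2 = d ((δ (va a)).2.1) := hmem2
      rwa [hc1] at this
    exact Prod.ext hc1 hc2
  · intro a
    have hsat := hpre'
    rw [← hX'eq, hY'eq] at hsat
    obtain ⟨b, hb⟩ := T_pre_decode hsat a
    obtain ⟨c, hc⟩ := hb
    exact ⟨c, (congrArg Prod.snd hc).symm.trans
      (by rw [show c = b from congrArg Prod.fst hc])⟩
  · have hrsub : Set.range d ⊆ Prod.snd '' Y' := by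
      rintro x ⟨a, rfl⟩
      refine ⟨(a, d a), ?_, rfl⟩
      rw [hY'eq]
      exact rfl
    calc (Set.range d).ncard ≤ (Prod.snd '' Y').ncard :=
          Set.ncard_le_ncard hrsub ((setAgreementTask.toCSC.finite_mem Y' hY'.1).image _)
      _ ≤ 2 := hY'.1.2.2

/-! ### The decision function extracted from `δ` -/

/-- the view of an agent who has seen exactly the (identity-input) agents in `S`. -/
def viewS (S : Set (Fin 3)) : Set (Fin 3 × Fin 3) := {p | p.1 ∈ S ∧ p.2 = p.1}

/-- the decision of agent `a` with view `S` (identity inputs on `S`). -/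
def dec (δ : (Fin 3 × Fin 3) × (Fin 3 × Set (Fin 3 × Fin 3)) → (Fin 3 × Fin 3) × (Fin 3 × Fin 3))
    (a : Fin 3) (S : Set (Fin 3)) : Fin 3 :=
  (δ ((a, a), (a, viewS S))).2.2

variable {δ : (Fin 3 × Fin 3) × (Fin 3 × Set (Fin 3 × Fin 3)) → (Fin 3 × Fin 3) × (Fin 3 × Fin 3)}

open Classical in
lemma valid
    (hδ : ((inputModel 2 (Fin 3)).update (ISact 2 (Fin 3))).IsMorphism
          ((inputModel 2 (Fin 3)).update setAgreementTask) δ)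
    (hπ : ∀ p, ((inputModel 2 (Fin 3)).update (ISact 2 (Fin 3))).toCSC.IsVertex p →
          (δ p).1 = p.1)
    (a : Fin 3) (S : Set (Fin 3)) (ha : a ∈ S) : dec δ a S ∈ S := by
  have hord : IsSeqPart (fun b => if b ∈ S then 0 else (1:ℕ)) := by
    intro b k hk
    have hb : (if b ∈ S then 0 else (1:ℕ)) ≤ 1 := by split <;> omega
    have hk1 : k ≤ 1 := le_trans hk hb
    interval_cases k
    · exact ⟨a, by simp [ha]⟩
    · exact ⟨b, le_antisymm hb hk⟩
  obtain ⟨d, h1, h2, -⟩ := facet_analysis δ hδ hπ (fun b => if b ∈ S then b else a)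
    (fun b => if b ∈ S then 0 else (1:ℕ)) hord
  have hview : isView (fun b => if b ∈ S then b else a) (fun b => if b ∈ S then 0 else (1:ℕ)) a
      = viewS S := by
    ext ⟨b, x⟩
    simp only [isView, viewS, Set.mem_setOf_eq]
    by_cases hb : b ∈ S <;> simp [hb, ha]
  have h := h1 a
  rw [hview, if_pos ha] at h
  have hda : dec δ a S = d a := congrArg Prod.snd h
  rw [hda]
  obtain ⟨b, hb⟩ := h2 a
  rw [hb]
  by_cases hbS : b ∈ S <;> simp [hbS, ha]

lemma agree
    (hδ : ((inputModel 2 (Fin 3)).update (ISact 2 (Fin 3))).IsMorphism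
          ((inputModel 2 (Fin 3)).update setAgreementTask) δ)
    (hπ : ∀ p, ((inputModel 2 (Fin 3)).update (ISact 2 (Fin 3))).toCSC.IsVertex p →
          (δ p).1 = p.1) :
    ∀ ord : Fin 3 → ℕ, IsSeqPart ord → ∀ S0 S1 S2 : Set (Fin 3),
      S0 = {b | ord b ≤ ord 0} → S1 = {b | ord b ≤ ord 1} → S2 = {b | ord b ≤ ord 2} →
      dec δ 0 S0 = dec δ 1 S1 ∨ dec δ 0 S0 = dec δ 2 S2 ∨ dec δ 1 S1 = dec δ 2 S2 := by
  intro ord hord S0 S1 S2 h0 h1 h2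
  subst h0; subst h1; subst h2
  obtain ⟨d, hd1, -, hd3⟩ := facet_analysis δ hδ hπ (fun b => b) ord hord
  have hdec : ∀ a : Fin 3, dec δ a {b | ord b ≤ ord a} = d a := by
    intro a
    have h := hd1 a
    rw [show isView (fun b => b) ord a = viewS {b | ord b ≤ ord a} from rfl] at h
    exact congrArg Prod.snd h
  by_contra hcon
  push_neg at hcon
  obtain ⟨h01, h02, h12⟩ := hcon
  rw [hdec 0, hdec 1] at h01
  rw [hdec 0, hdec 2] at h02
  rw [hdec 1, hdec 2] at h12
  have h3 : ({d 0, d 1, d 2} : Set (Fin 3)).ncard = 3 :=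
    Set.ncard_eq_three.mpr ⟨d 0, d 1, d 2, h01, h02, h12, rfl⟩
  have hsub : ({d 0, d 1, d 2} : Set (Fin 3)) ⊆ Set.range d := by
    intro x hx
    rcases hx with rfl | rfl | rfl
    exacts [⟨0, rfl⟩, ⟨1, rfl⟩, ⟨2, rfl⟩]
  have hle := Set.ncard_le_ncard hsub (Set.finite_range d)
  omega

/-! ### The combinatorial core: Sperner's lemma for the chromatic subdivision -/

set_option maxHeartbeats 1000000 in
set_option synthInstance.maxHeartbeats 200000 in
set_option synthInstance.maxSize 2000 in
lemma spernerCore : ∀ u0 u1 u2 q01 q10 q02 q20 q12 q21 : Fin 3,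
    (q01 = 0 ∨ q01 = 1) → (q10 = 0 ∨ q10 = 1) →
    (q02 = 0 ∨ q02 = 2) → (q20 = 0 ∨ q20 = 2) →
    (q12 = 1 ∨ q12 = 2) → (q21 = 1 ∨ q21 = 2) →
    (u0 = u1 ∨ u0 = u2 ∨ u1 = u2) →
    ((0:Fin 3) = u1 ∨ (0:Fin 3) = u2 ∨ u1 = u2) →
    (u0 = 1 ∨ u0 = u2 ∨ (1:Fin 3) = u2) →
    (u0 = u1 ∨ u0 = 2 ∨ u1 = 2) →
    (q01 = q10 ∨ q01 = u2 ∨ q10 = u2) →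
    (q02 = u1 ∨ q02 = q20 ∨ u1 = q20) →
    (u0 = q12 ∨ u0 = q21 ∨ q12 = q21) →
    ((0:Fin 3) = q10 ∨ (0:Fin 3) = u2 ∨ q10 = u2) →
    (q01 = 1 ∨ q01 = u2 ∨ (1:Fin 3) = u2) →
    ((0:Fin 3) = u1 ∨ (0:Fin 3) = q20 ∨ u1 = q20) →
    (q02 = u1 ∨ q02 = 2 ∨ u1 = 2) →
    (u0 = 1 ∨ u0 = q21 ∨ (1:Fin 3) = q21) →
    (u0 = q12 ∨ u0 = 2 ∨ q12 = 2) → False := by decide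

/-! ### The sequential partitions used -/

lemma exists_ne3 (i : Fin 3) : ∃ c : Fin 3, c ≠ i := by
  fin_cases i
  · exact ⟨1, by decide⟩
  · exact ⟨0, by decide⟩
  · exact ⟨0, by decide⟩

lemma sp_all : IsSeqPart (fun _ : Fin 3 => (0:ℕ)) :=
  fun _ k hk => ⟨0, (Nat.le_zero.mp hk).symm⟩

lemma sp_S (i : Fin 3) : IsSeqPart (fun b => if b = i then (0:ℕ) else 1) := by
  intro a k hk
  have hb : (if a = i then (0:ℕ) else 1) ≤ 1 := by split <;> omega
  have hk1 : k ≤ 1 := le_trans hk hb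
  interval_cases k
  · exact ⟨i, if_pos rfl⟩
  · obtain ⟨c, hc⟩ := exists_ne3 i
    exact ⟨c, if_neg hc⟩

lemma sp_P (i : Fin 3) : IsSeqPart (fun b => if b = i then (1:ℕ) else 0) := by
  intro a k hk
  have hb : (if a = i then (1:ℕ) else 0) ≤ 1 := by split <;> omega
  have hk1 : k ≤ 1 := le_trans hk hb
  interval_cases k
  · obtain ⟨c, hc⟩ := exists_ne3 i
    exact ⟨c, if_neg hc⟩
  · exact ⟨i, if_pos rfl⟩

lemma sp_T (i j : Fin 3) (hij : j ≠ i) (hex : ∃ c : Fin 3, c ≠ i ∧ c ≠ j) :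
    IsSeqPart (fun b => if b = i then (0:ℕ) else if b = j then 1 else 2) := by
  intro a k hk
  have hb : (if a = i then (0:ℕ) else if a = j then 1 else 2) ≤ 2 := by
    split
    · omega
    · split <;> omega
  have hk1 : k ≤ 2 := le_trans hk hb
  obtain ⟨c, hci, hcj⟩ := hex
  interval_cases k
  · exact ⟨i, if_pos rfl⟩
  · exact ⟨j, by simp [hij]⟩
  · exact ⟨c, by simp [hci, hcj]⟩

/-! ### Sperner's argument -/

lemma sperner (f : Fin 3 → Set (Fin 3) → Fin 3)
    (Hv : ∀ a S, a ∈ S → f a S ∈ S)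
    (Ha : ∀ ord : Fin 3 → ℕ, IsSeqPart ord → ∀ S0 S1 S2 : Set (Fin 3),
      S0 = {b | ord b ≤ ord 0} → S1 = {b | ord b ≤ ord 1} → S2 = {b | ord b ≤ ord 2} →
      f 0 S0 = f 1 S1 ∨ f 0 S0 = f 2 S2 ∨ f 1 S1 = f 2 S2) : False := by
  have hs0 : f 0 {0} = 0 := Set.mem_singleton_iff.mp (Hv 0 {0} rfl)
  have hs1 : f 1 {1} = 1 := Set.mem_singleton_iff.mp (Hv 1 {1} rfl)
  have hs2 : f 2 {2} = 2 := Set.mem_singleton_iff.mp (Hv 2 {2} rfl)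
  have hq01 : f 0 {0,1} = 0 ∨ f 0 {0,1} = 1 := by simpa using Hv 0 {0,1} (by simp)
  have hq10 : f 1 {0,1} = 0 ∨ f 1 {0,1} = 1 := by simpa using Hv 1 {0,1} (by simp)
  have hq02 : f 0 {0,2} = 0 ∨ f 0 {0,2} = 2 := by simpa using Hv 0 {0,2} (by simp)
  have hq20 : f 2 {0,2} = 0 ∨ f 2 {0,2} = 2 := by simpa using Hv 2 {0,2} (by simp)
  have hq12 : f 1 {1,2} = 1 ∨ f 1 {1,2} = 2 := by simpa using Hv 1 {1,2} (by simp)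
  have hq21 : f 2 {1,2} = 1 ∨ f 2 {1,2} = 2 := by simpa using Hv 2 {1,2} (by simp)
  have t1 := Ha (fun _ => 0) sp_all Set.univ Set.univ Set.univ
    (by ext b; simp) (by ext b; simp) (by ext b; simp)
  have t2 := Ha _ (sp_S 0) {0} Set.univ Set.univ
    (by ext b; fin_cases b <;> simp) (by ext b; fin_cases b <;> simp)
    (by ext b; fin_cases b <;> simp)
  have t3 := Ha _ (sp_S 1) Set.univ {1} Set.univ
    (by ext b; fin_cases b <;> simp) (by ext b; fin_cases b <;> simp)
    (by ext b; fin_cases b <;> simp)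
  have t4 := Ha _ (sp_S 2) Set.univ Set.univ {2}
    (by ext b; fin_cases b <;> simp) (by ext b; fin_cases b <;> simp)
    (by ext b; fin_cases b <;> simp)
  have t5 := Ha _ (sp_P 2) {0,1} {0,1} Set.univ
    (by ext b; fin_cases b <;> simp) (by ext b; fin_cases b <;> simp)
    (by ext b; fin_cases b <;> simp)
  have t6 := Ha _ (sp_P 1) {0,2} Set.univ {0,2}
    (by ext b; fin_cases b <;> simp) (by ext b; fin_cases b <;> simp)
    (by ext b; fin_cases b <;> simp)
  have t7 := Ha _ (sp_P 0) Set.univ {1,2} {1,2}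
    (by ext b; fin_cases b <;> simp) (by ext b; fin_cases b <;> simp)
    (by ext b; fin_cases b <;> simp)
  have t8 := Ha _ (sp_T 0 1 (by decide) (by decide)) {0} {0,1} Set.univ
    (by ext b; fin_cases b <;> simp) (by ext b; fin_cases b <;> simp)
    (by ext b; fin_cases b <;> simp)
  have t9 := Ha _ (sp_T 1 0 (by decide) (by decide)) {0,1} {1} Set.univ
    (by ext b; fin_cases b <;> simp) (by ext b; fin_cases b <;> simp)
    (by ext b; fin_cases b <;> simp)
  have t10 := Ha _ (sp_T 0 2 (by decide) (by decide)) {0} Set.univ {0,2}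
    (by ext b; fin_cases b <;> simp) (by ext b; fin_cases b <;> simp)
    (by ext b; fin_cases b <;> simp)
  have t11 := Ha _ (sp_T 2 0 (by decide) (by decide)) {0,2} Set.univ {2}
    (by ext b; fin_cases b <;> simp) (by ext b; fin_cases b <;> simp)
    (by ext b; fin_cases b <;> simp)
  have t12 := Ha _ (sp_T 1 2 (by decide) (by decide)) Set.univ {1} {1,2}
    (by ext b; fin_cases b <;> simp) (by ext b; fin_cases b <;> simp)
    (by ext b; fin_cases b <;> simp)
  have t13 := Ha _ (sp_T 2 1 (by decide) (by decide)) Set.univ {1,2} {2}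
    (by ext b; fin_cases b <;> simp) (by ext b; fin_cases b <;> simp)
    (by ext b; fin_cases b <;> simp)
  rw [hs0] at t2 t8 t10
  rw [hs1] at t3 t9 t12
  rw [hs2] at t4 t11 t13
  exact spernerCore (f 0 Set.univ) (f 1 Set.univ) (f 2 Set.univ)
    (f 0 {0,1}) (f 1 {0,1}) (f 0 {0,2}) (f 2 {0,2}) (f 1 {1,2}) (f 2 {1,2})
    hq01 hq10 hq02 hq20 hq12 hq21 t1 t2 t3 t4 t5 t6 t7 t8 t9 t10 t11 t12 t13

end S18

/-- The 2-set agreement task for three agents is not solvable by the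
one-round immediate snapshot action model `IS`: there is no morphism of simplicial models
`δ : I[IS] → I[𝒯]` commuting with the projections to the input model `I` (inputs in
`{0,1,2}`). -/
theorem statement18 :
    ¬ ∃ δ : (Fin 3 × Fin 3) × (Fin 3 × Set (Fin 3 × Fin 3)) →
            (Fin 3 × Fin 3) × (Fin 3 × Fin 3),
        ((inputModel 2 (Fin 3)).update (ISact 2 (Fin 3))).IsMorphism
          ((inputModel 2 (Fin 3)).update setAgreementTask) δ ∧
        ∀ p, ((inputModel 2 (Fin 3)).update (ISact 2 (Fin 3))).toCSC.IsVertex p →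
          (δ p).1 = p.1 := by
  rintro ⟨δ, hδ, hπ⟩
  exact S18.sperner (S18.dec δ) (fun a S ha => S18.valid hδ hπ a S ha) (S18.agree hδ hπ)
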